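/- arXiv:1509.03625 — 2 statements merged into one kernel-verified Lean document; each statement's English description precedes it below -/
import Mathlib

section
/- There exists an absolute constant c > 0 such that for every choice of (deterministic) signals s_1, …, s_{N_T} ∈ ℂ^{N_t} and every sparsity level s: if the restricted isometry constant of the scaled MIMO measurement matrix Ã ∈ ℂ^{N_R N_t × N} satisfies δ_{2s}(Ã) < 1/√2, then N_t ≥ c·s·log(e·N_t²/s). -/
open MeasureTheory ProbabilityTheory Complex
open scoped ENNReal Matrix

noncomputable section

namespace MIMO

/-- Squared ℓ²-norm of a complex vector. -/
def l2normSq {ι : Type*} [Fintype ι] (x : ι → ℂ) : ℝ := ∑ i, ‖x i‖ ^ 2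

/-- ℓ²-norm of a complex vector. -/
def l2norm {ι : Type*} [Fintype ι] (x : ι → ℂ) : ℝ := Real.sqrt (l2normSq x)

/-- ℓ¹-norm of a complex vector. -/
def l1norm {ι : Type*} [Fintype ι] (x : ι → ℂ) : ℝ := ∑ i, ‖x i‖

/-- Hermitian inner product, conjugate-linear in the first argument. -/
def cInner {ι : Type*} [Fintype ι] (x y : ι → ℂ) : ℂ := ∑ i, (starRingEnd ℂ) (x i) * y i

/-- Spectral norm (ℓ² → ℓ² operator norm) of a complex matrix. -/
def specNorm {m n : Type*} [Fintype m] [Fintype n] (A : Matrix m n ℂ) : ℝ :=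
  sSup ((fun x => l2norm (A.mulVec x)) '' {x | l2norm x ≤ 1})

/-- Frobenius norm of a complex matrix. -/
def frobNorm {m n : Type*} [Fintype m] [Fintype n] (A : Matrix m n ℂ) : ℝ :=
  Real.sqrt (∑ i, ∑ j, ‖A i j‖ ^ 2)

/-- The standard complex Gaussian measure on ℂ: real and imaginary parts are
independent real centered Gaussians of variance 1/2. -/
def stdCGaussian : Measure ℂ :=
  Measure.map (⇑Complex.measurableEquivRealProd.symm)
    ((gaussianReal 0 (1/2)).prod (gaussianReal 0 (1/2)))

/-- A mean-zero complex Gaussian measure of variance σ² on ℂ. -/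
def cGaussian (σ : ℝ) : Measure ℂ :=
  Measure.map (fun z : ℂ => (σ : ℂ) * z) stdCGaussian

/-- Complex Gaussian noise (independent entries, variance σ²). -/
def noiseMeasure (ι : Type*) [Fintype ι] (σ : ℝ) : Measure (ι → ℂ) :=
  Measure.pi (fun _ => cGaussian σ)

/-- The Steinhaus (uniform) distribution on the complex unit circle. -/
def steinhaus : Measure ℂ :=
  Measure.map (fun θ : ℝ => Complex.exp (θ * Complex.I))
    ((ENNReal.ofReal (2 * Real.pi))⁻¹ • volume.restrict (Set.Ico (0:ℝ) (2 * Real.pi)))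

/-- A Steinhaus vector: independent entries uniform on the complex unit circle. -/
def steinhausPi (ι : Type*) [Fintype ι] : Measure (ι → ℂ) := Measure.pi (fun _ => steinhaus)

/-- The joint distribution of the NT independent standard complex Gaussian signals in ℂ^{Nt}. -/
def signalMeasure (NT Nt : ℕ) : Measure (Fin NT → Fin Nt → ℂ) :=
  Measure.pi (fun _ => Measure.pi (fun _ => stdCGaussian))

/-- The angle–delay–Doppler parameter grid `[N_T N_R] × [N_t] × [N_t]`. -/
abbrev Grid (NT NR Nt : ℕ) := Fin (NT * NR) × Fin Nt × Fin Nt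

/-- `e^{2πi x}`. -/
def ePhase (x : ℝ) : ℂ := Complex.exp (((2 * Real.pi * x : ℝ) : ℂ) * Complex.I)

/-- The modulated circulant shift `M_f T_τ` applied to a signal:
`(M_f T_τ s)_k = e^{2πi f (k-1)/N_t} s_{k-τ}` (1-based indices; `k.val = k-1`). -/
def modShift (Nt : ℕ) [NeZero Nt] (τ f : ℕ) (s : Fin Nt → ℂ) (k : Fin Nt) : ℂ :=
  ePhase ((f : ℝ) * (k.1 : ℝ) / (Nt : ℝ)) * s (k - Fin.ofNat Nt τ)

/-- The column `A_Θ` of the MIMO measurement matrix, `Θ = (β,τ,f)`;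
its `j`-th length-`N_t` block is
`e^{2πi β (j-1)/N_R} ∑_i e^{2πi β (i-1)/(N_T N_R)} M_f T_τ s_i`. -/
def colA (NT NR Nt : ℕ) [NeZero Nt] (sg : Fin NT → Fin Nt → ℂ)
    (Θ : Grid NT NR Nt) (p : Fin NR × Fin Nt) : ℂ :=
  ePhase (((Θ.1.1 : ℝ) + 1) * (p.1.1 : ℝ) / (NR : ℝ)) *
    ∑ i : Fin NT, ePhase (((Θ.1.1 : ℝ) + 1) * (i.1 : ℝ) / ((NT : ℝ) * (NR : ℝ))) *
      modShift Nt (Θ.2.1.1 + 1) (Θ.2.2.1 + 1) (sg i) p.2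

/-- The column `Ã_Θ = (N_T N_R N_t)^{-1/2} A_Θ` of the scaled measurement matrix. -/
def colAt (NT NR Nt : ℕ) [NeZero Nt] (sg : Fin NT → Fin Nt → ℂ)
    (Θ : Grid NT NR Nt) (p : Fin NR × Fin Nt) : ℂ :=
  ((Real.sqrt ((NT : ℝ) * (NR : ℝ) * (Nt : ℝ)) : ℂ))⁻¹ * colA NT NR Nt sg Θ p

/-- The MIMO measurement matrix `A`. -/
def Amat (NT NR Nt : ℕ) [NeZero Nt] (sg : Fin NT → Fin Nt → ℂ) :
    Matrix (Fin NR × Fin Nt) (Grid NT NR Nt) ℂ := fun p Θ => colA NT NR Nt sg Θ p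

/-- The scaled MIMO measurement matrix `Ã = (N_T N_R N_t)^{-1/2} A`. -/
def Atil (NT NR Nt : ℕ) [NeZero Nt] (sg : Fin NT → Fin Nt → ℂ) :
    Matrix (Fin NR × Fin Nt) (Grid NT NR Nt) ℂ := fun p Θ => colAt NT NR Nt sg Θ p

/-- The Gram matrix `Ã_T^* Ã_T` of the columns of `Ã` indexed by a subset `T`. -/
def gram (NT NR Nt : ℕ) [NeZero Nt] (sg : Fin NT → Fin Nt → ℂ)
    (T : Finset (Grid NT NR Nt)) : Matrix {Θ // Θ ∈ T} {Θ // Θ ∈ T} ℂ :=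
  fun Θ Θ' => cInner (colAt NT NR Nt sg Θ.1) (colAt NT NR Nt sg Θ'.1)

/-- `S_{[β]}`: the elements of `S` whose angle parameter is equivalent to `β`
(equivalent ⟺ difference divisible by `N_R`). -/
def classOf (NT NR Nt : ℕ) (S : Finset (Grid NT NR Nt)) (β : Fin (NT * NR)) :
    Finset (Grid NT NR Nt) :=
  S.filter (fun Θ => ((Θ.1.1 : ℤ) - (β.1 : ℤ)) % (NR : ℤ) = 0)

/-- A support set `S` is `η`-balanced if `|S_{[β]}| ≤ η |S| / N_R` for every angle class. -/
def IsBalanced (NT NR Nt : ℕ) (S : Finset (Grid NT NR Nt)) (η : ℝ) : Prop :=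
  ∀ β : Fin (NT * NR), ((classOf NT NR Nt S β).card : ℝ) ≤ η * (S.card : ℝ) / (NR : ℝ)

/-- The restricted isometry constant `δ_s(A)`: the smallest `δ ≥ 0` such that
`(1-δ)‖x‖₂² ≤ ‖Ax‖₂² ≤ (1+δ)‖x‖₂²` for all `s`-sparse `x`. -/
def ripConst {m n : Type*} [Fintype m] [Fintype n] (s : ℕ) (A : Matrix m n ℂ) : ℝ :=
  sInf {δ : ℝ | 0 ≤ δ ∧ ∀ x : n → ℂ, (Function.support x).ncard ≤ s →
    (1 - δ) * l2normSq x ≤ l2normSq (A.mulVec x) ∧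
      l2normSq (A.mulVec x) ≤ (1 + δ) * l2normSq x}


open Metric

lemma l2normSq_nonneg {ι : Type*} [Fintype ι] (x : ι → ℂ) : 0 ≤ l2normSq x :=
  Finset.sum_nonneg fun _ _ => by positivity

lemma l2normSq_pos {ι : Type*} [Fintype ι] {x : ι → ℂ} (hx : x ≠ 0) : 0 < l2normSq x := by
  obtain ⟨i, hi⟩ : ∃ i, x i ≠ 0 := by
    by_contra h; push_neg at h; exact hx (funext h)
  exact Finset.sum_pos' (fun j _ => by positivity)
    ⟨i, Finset.mem_univ i, pow_pos (norm_pos_iff.mpr hi) 2⟩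

lemma l2normSq_zero {ι : Type*} [Fintype ι] : l2normSq (0 : ι → ℂ) = 0 := by
  simp [l2normSq]

/-- kernel vector lemma -/
lemma kern {d : ℕ} {ι : Type*} [Fintype ι] [DecidableEq ι] (M : Matrix (Fin d) ι ℂ)
    (T : Finset ι) (h : d < T.card) :
    ∃ y : ι → ℂ, y ≠ 0 ∧ Function.support y ⊆ ↑T ∧ M.mulVec y = 0 := by
  classical
  have hni : ¬ LinearIndependent ℂ (fun a : {x // x ∈ T} => (fun p => M p a.1 : Fin d → ℂ)) := by
    intro hli
    have h2 := hli.fintype_card_le_finrank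
    rw [Module.finrank_fin_fun] at h2
    simp only [Fintype.card_coe] at h2
    omega
  rw [Fintype.not_linearIndependent_iff] at hni
  obtain ⟨g, hg0, i0, hgi⟩ := hni
  set y : ι → ℂ := fun a => if h : a ∈ T then g ⟨a, h⟩ else 0 with hydef
  refine ⟨y, ?_, ?_, ?_⟩
  · intro hy
    apply hgi
    have := congrFun hy i0.1
    simpa [hydef, i0.2] using this
  · intro a ha
    simp only [Function.mem_support] at ha
    rcases Decidable.em (a ∈ T) with h1 | h1
    · exact Finset.mem_coe.mpr h1
    · simp [hydef, h1] at ha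
  · funext p
    have hz := congrFun hg0 p
    simp only [Pi.zero_apply] at hz
    simp only [Matrix.mulVec, dotProduct, Pi.zero_apply]
    calc ∑ a : ι, M p a * y a
        = ∑ a ∈ T, M p a * y a := by
          refine (Finset.sum_subset (Finset.subset_univ T) fun a _ haT => ?_).symm
          simp [hydef, haT]
      _ = ∑ a ∈ T.attach, M p a.1 * y a.1 := (Finset.sum_attach T _).symm
      _ = ∑ a ∈ T.attach, (g a • fun q => M q a.1 : Fin d → ℂ) p := by
          refine Finset.sum_congr rfl fun a _ => ?_
          simp [hydef, a.2, mul_comm]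
      _ = (∑ i : { x // x ∈ T }, g i • fun q => M q i.1 : Fin d → ℂ) p := by
          rw [Finset.sum_apply, Finset.univ_eq_attach]
      _ = 0 := hz

/-- greedy separated subset -/
lemma greedy {X : Type*} [Fintype X] [DecidableEq X] (Rl : X → X → Prop) [DecidableRel Rl]
    (hsym : ∀ x y, Rl x y → Rl y x) (hrefl : ∀ x, Rl x x) (V : ℕ)
    (hV : ∀ x, (Finset.univ.filter (fun y => Rl x y)).card ≤ V) :
    ∃ S : Finset X, (∀ x ∈ S, ∀ y ∈ S, x ≠ y → ¬ Rl x y) ∧ Fintype.card X ≤ S.card * V := by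
  classical
  suffices h : ∀ N (T : Finset X), T.card ≤ N → ∃ S : Finset X, S ⊆ T ∧
      (∀ x ∈ S, ∀ y ∈ S, x ≠ y → ¬ Rl x y) ∧ T.card ≤ S.card * V by
    obtain ⟨S, _, h1, h2⟩ := h (Fintype.card X) Finset.univ (le_of_eq Finset.card_univ)
    exact ⟨S, h1, by simpa [Finset.card_univ] using h2⟩
  intro N
  induction N with
  | zero =>
    intro T hT
    exact ⟨∅, Finset.empty_subset _, by simp, by simpa using hT⟩
  | succ N ih =>
    intro T hT
    rcases T.eq_empty_or_nonempty with rfl | ⟨x, hx⟩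
    · exact ⟨∅, Finset.empty_subset _, by simp, by simp⟩
    · set T' := T.filter (fun y => ¬ Rl x y) with hT'
      have hxT' : x ∉ T' := by simp [hT', hrefl x]
      have hsub : T' ⊆ T.erase x := by
        intro y hy
        simp only [hT', Finset.mem_filter] at hy
        refine Finset.mem_erase.2 ⟨?_, hy.1⟩
        rintro rfl; exact hy.2 (hrefl _)
      have hT'card : T'.card ≤ N := by
        have := Finset.card_le_card hsub
        have h2 := Finset.card_erase_of_mem hx
        omega
      obtain ⟨S, hST, hsep, hcount⟩ := ih T' hT'card
      have hxS : x ∉ S := fun hc => hxT' (hST hc)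
      refine ⟨insert x S, ?_, ?_, ?_⟩
      · intro y hy
        rcases Finset.mem_insert.1 hy with rfl | hy'
        · exact hx
        · exact Finset.filter_subset _ _ (hST hy')
      · intro a ha b hb hab
        rcases Finset.mem_insert.1 ha with rfl | ha' <;>
          rcases Finset.mem_insert.1 hb with rfl | hb'
        · exact absurd rfl hab
        · have := hST hb'
          simp only [hT', Finset.mem_filter] at this
          exact this.2
        · have := hST ha'
          simp only [hT', Finset.mem_filter] at this
          intro hR; exact this.2 (hsym _ _ hR)
        · exact hsep a ha' b hb' hab
      · have hpart : (T.filter (fun y => Rl x y)).card + T'.card = T.card :=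
          Finset.card_filter_add_card_filter_not _
        have hball : (T.filter (fun y => Rl x y)).card ≤ V :=
          le_trans (Finset.card_le_card (Finset.filter_subset_filter _ (Finset.subset_univ T))) (hV x)
        rw [Finset.card_insert_of_notMem hxS]
        have := hcount
        nlinarith [hcount, hball, hpart]



/-- Hamming-ball counting bound -/
lemma ballBound (s q t : ℕ) (hq : 1 ≤ q) (f : Fin s → Fin q) :
    ((Finset.univ : Finset (Fin s → Fin q)).filter
      (fun g => (Finset.univ.filter (fun i => g i ≠ f i)).card ≤ t)).card ≤ 2 ^ s * q ^ t := by
  classical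
  set P := (Finset.univ : Finset (Fin s)).powerset.filter (fun D => D.card ≤ t) with hP
  have hsub : (Finset.univ : Finset (Fin s → Fin q)).filter
      (fun g => (Finset.univ.filter (fun i => g i ≠ f i)).card ≤ t) ⊆
      P.biUnion (fun D => Finset.univ.filter (fun g => ∀ i ∉ D, g i = f i)) := by
    intro g hg
    simp only [Finset.mem_filter, Finset.mem_univ, true_and] at hg
    refine Finset.mem_biUnion.2 ⟨Finset.univ.filter (fun i => g i ≠ f i), ?_, ?_⟩
    · simp only [hP, Finset.mem_filter, Finset.mem_powerset]
      exact ⟨Finset.filter_subset _ _, hg⟩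
    · simp only [Finset.mem_filter, Finset.mem_univ, true_and]
      intro i hi
      simp only [Finset.mem_filter, Finset.mem_univ, true_and, not_not] at hi
      exact hi
  have hcardD : ∀ D ∈ P, (Finset.univ.filter (fun g : Fin s → Fin q => ∀ i ∉ D, g i = f i)).card
      ≤ q ^ t := by
    intro D hD
    simp only [hP, Finset.mem_filter, Finset.mem_powerset] at hD
    have hinj : Set.InjOn (fun g : Fin s → Fin q => (fun i : {x // x ∈ D} => g i.1))
        ↑(Finset.univ.filter (fun g : Fin s → Fin q => ∀ i ∉ D, g i = f i)) := by
      intro g1 h1 g2 h2 he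
      simp only [Finset.coe_filter, Set.mem_setOf_eq, Finset.mem_univ, true_and] at h1 h2
      funext i
      by_cases hiD : i ∈ D
      · exact congrFun he ⟨i, hiD⟩
      · rw [h1 i hiD, h2 i hiD]
    calc (Finset.univ.filter (fun g : Fin s → Fin q => ∀ i ∉ D, g i = f i)).card
        ≤ Fintype.card ({x // x ∈ D} → Fin q) := by
          have := Finset.card_le_card_of_injOn (fun g : Fin s → Fin q => (fun i : {x // x ∈ D} => g i.1))
            (fun g _ => Finset.mem_univ _) hinj
          simpa using this
      _ = q ^ D.card := by
          rw [Fintype.card_fun, Fintype.card_fin, Fintype.card_coe]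
      _ ≤ q ^ t := Nat.pow_le_pow_right hq hD.2
  calc ((Finset.univ : Finset (Fin s → Fin q)).filter _).card
      ≤ ∑ D ∈ P, (Finset.univ.filter (fun g : Fin s → Fin q => ∀ i ∉ D, g i = f i)).card :=
        le_trans (Finset.card_le_card hsub) (Finset.card_biUnion_le)
    _ ≤ ∑ _D ∈ P, q ^ t := Finset.sum_le_sum hcardD
    _ = P.card * q ^ t := by rw [Finset.sum_const, smul_eq_mul]
    _ ≤ 2 ^ s * q ^ t := by
        have : P.card ≤ 2 ^ s := by
          have h1 : P ⊆ (Finset.univ : Finset (Fin s)).powerset := Finset.filter_subset _ _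
          have h2 := Finset.card_le_card h1
          rwa [Finset.card_powerset, Finset.card_univ, Fintype.card_fin] at h2
        exact Nat.mul_le_mul_right _ this

/-- volumetric packing bound in Euclidean space -/
lemma packing {d n : ℕ} (Y : Fin n → EuclideanSpace ℝ (Fin d × Bool)) {R r : ℝ}
    (hr : 0 < r) (hb : ∀ i, ‖Y i‖ ≤ R) (hsep : ∀ i j, i ≠ j → r ≤ ‖Y i - Y j‖) :
    (n : ℝ) * (r / 2) ^ (2 * d) ≤ (R + r / 2) ^ (2 * d) := by
  rcases Nat.eq_zero_or_pos n with rfl | hn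
  · simpa using (Even.pow_nonneg (by exact even_two_mul d) (R + r/2))
  have hR : 0 ≤ R := le_trans (norm_nonneg _) (hb ⟨0, hn⟩)
  set μ : Measure (EuclideanSpace ℝ (Fin d × Bool)) := volume with hμ
  have hD : Module.finrank ℝ (EuclideanSpace ℝ (Fin d × Bool)) = 2 * d := by
    rw [finrank_euclideanSpace, Fintype.card_prod, Fintype.card_fin, Fintype.card_bool]
    ring
  have hdisj : Pairwise (Function.onFun Disjoint (fun i => ball (Y i) (r / 2))) := by
    intro i j hij
    refine ball_disjoint_ball ?_
    rw [dist_eq_norm]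
    linarith [hsep i j hij]
  have hcover : (⋃ i, ball (Y i) (r / 2)) ⊆ ball (0 : EuclideanSpace ℝ (Fin d × Bool)) (R + r / 2) := by
    intro z hz
    obtain ⟨i, hi⟩ := Set.mem_iUnion.1 hz
    rw [mem_ball, dist_zero_right]
    have h1 : ‖z - Y i‖ < r / 2 := by
      rw [← dist_eq_norm]; exact mem_ball.1 hi
    have h2 : ‖z‖ ≤ ‖z - Y i‖ + ‖Y i‖ := by
      simpa using norm_add_le (z - Y i) (Y i)
    linarith [hb i]
  have hmeas : μ (⋃ i, ball (Y i) (r / 2)) = ∑ i : Fin n, μ (ball (Y i) (r / 2)) := by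
    rw [measure_iUnion hdisj fun i => measurableSet_ball]
    exact tsum_fintype _
  have hball : ∀ x : EuclideanSpace ℝ (Fin d × Bool), μ (ball x (r / 2)) =
      ENNReal.ofReal ((r / 2) ^ (2 * d)) * μ (ball (0 : EuclideanSpace ℝ (Fin d × Bool)) 1) := by
    intro x
    rw [Measure.addHaar_ball_of_pos μ x (by linarith), hD]
  have hbig : μ (ball (0 : EuclideanSpace ℝ (Fin d × Bool)) (R + r / 2)) =
      ENNReal.ofReal ((R + r / 2) ^ (2 * d)) * μ (ball (0 : EuclideanSpace ℝ (Fin d × Bool)) 1) := by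
    rw [Measure.addHaar_ball_of_pos μ _ (by linarith), hD]
  have hK0 : μ (ball (0 : EuclideanSpace ℝ (Fin d × Bool)) 1) ≠ 0 := (measure_ball_pos μ _ one_pos).ne'
  have hKt : μ (ball (0 : EuclideanSpace ℝ (Fin d × Bool)) 1) ≠ ⊤ := measure_ball_lt_top.ne
  have hchain : (n : ℝ≥0∞) * (ENNReal.ofReal ((r / 2) ^ (2 * d)) * μ (ball (0 : EuclideanSpace ℝ (Fin d × Bool)) 1)) ≤
      ENNReal.ofReal ((R + r / 2) ^ (2 * d)) * μ (ball (0 : EuclideanSpace ℝ (Fin d × Bool)) 1) := by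
    calc (n : ℝ≥0∞) * (ENNReal.ofReal ((r / 2) ^ (2 * d)) * μ (ball (0 : EuclideanSpace ℝ (Fin d × Bool)) 1))
        = ∑ i : Fin n, μ (ball (Y i) (r / 2)) := by
          simp only [hball, Finset.sum_const, Finset.card_univ, Fintype.card_fin, nsmul_eq_mul]
      _ = μ (⋃ i, ball (Y i) (r / 2)) := hmeas.symm
      _ ≤ μ (ball (0 : EuclideanSpace ℝ (Fin d × Bool)) (R + r / 2)) := measure_mono hcover
      _ = _ := hbig
  rw [← mul_assoc] at hchain
  have h2 := (ENNReal.mul_le_mul_iff_left hK0 hKt).1 hchain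
  have h3 : ENNReal.ofReal ((n : ℝ) * (r / 2) ^ (2 * d)) ≤
      ENNReal.ofReal ((R + r / 2) ^ (2 * d)) := by
    rw [ENNReal.ofReal_mul (by positivity)]
    simpa [ENNReal.ofReal_natCast] using h2
  exact (ENNReal.ofReal_le_ofReal_iff (by positivity)).1 h3


section Key
variable {ι : Type*} [Fintype ι]

/-- agreement count -/
def agree {s q : ℕ} (f g : Fin s → Fin q) : ℕ := (Finset.univ.filter (fun i => f i = g i)).card

lemma agree_symm {s q : ℕ} (f g : Fin s → Fin q) : agree f g = agree g f := by
  unfold agree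
  congr 1
  apply Finset.filter_congr
  intro i _
  simp [eq_comm]

set_option maxHeartbeats 1000000 in
/-- main abstract RIP lower bound -/
lemma key {d s : ℕ} {ι : Type*} [Fintype ι] (M : Matrix (Fin d) ι ℂ) (hs : 1 ≤ s)
    (hn1 : 1 ≤ Fintype.card ι) (δ : ℝ) (hδ0 : 0 ≤ δ) (hδ : δ < 1 / Real.sqrt 2)
    (hRIP : ∀ y : ι → ℂ, (Function.support y).ncard ≤ 2 * s →
      (1 - δ) * l2normSq y ≤ l2normSq (M.mulVec y) ∧
      l2normSq (M.mulVec y) ≤ (1 + δ) * l2normSq y) :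
    (s : ℝ) * Real.log (Real.exp 1 * (Fintype.card ι) / s) ≤ 100 * d := by
  classical
  set n := Fintype.card ι with hn
  have hsqrt2 : Real.sqrt 2 * Real.sqrt 2 = 2 := Real.mul_self_sqrt (by norm_num)
  have hsqrt2pos : 0 < Real.sqrt 2 := Real.sqrt_pos.2 (by norm_num)
  have hδ34 : δ ≤ 3 / 4 := by
    have : 1 / Real.sqrt 2 ≤ 3 / 4 := by
      rw [div_le_div_iff₀ hsqrt2pos (by norm_num)]
      nlinarith
    linarith
  have hδ1 : 1 - δ ≥ 1 / 4 := by linarith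
  -- the analytic bound : if n ≤ d we are done
  have hanalytic : (s : ℝ) * Real.log (Real.exp 1 * n / s) ≤ (n : ℝ) := by
    have hs0 : (0 : ℝ) < s := by exact_mod_cast hs
    have hn0 : (0 : ℝ) < n := by exact_mod_cast hn1
    have h1 : Real.exp 1 * n / s = Real.exp 1 * ((n : ℝ) / s) := by ring
    rw [h1, Real.log_mul (Real.exp_ne_zero 1) (by positivity), Real.log_exp]
    have h2 : Real.log ((n : ℝ) / s) ≤ (n : ℝ) / s - 1 :=
      Real.log_le_sub_one_of_pos (by positivity)
    have h3 : 1 + Real.log ((n : ℝ) / s) ≤ (n : ℝ) / s := by linarith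
    calc (s : ℝ) * (1 + Real.log ((n : ℝ) / s)) ≤ (s : ℝ) * ((n : ℝ) / s) :=
          mul_le_mul_of_nonneg_left h3 (le_of_lt hs0)
      _ = (n : ℝ) := by field_simp
  by_cases hnd : n ≤ d
  · calc (s : ℝ) * Real.log (Real.exp 1 * n / s) ≤ (n : ℝ) := hanalytic
      _ ≤ (d : ℝ) := by exact_mod_cast hnd
      _ ≤ 100 * d := by have : (0:ℝ) ≤ (d:ℝ) := Nat.cast_nonneg d; linarith
  push_neg at hnd
  -- kernel step : 2 * s ≤ d
  have h2sd : 2 * s ≤ d := by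
    by_contra hcon
    push_neg at hcon
    have hmin : d < min (2 * s) n := lt_min hcon hnd
    obtain ⟨T, _, hTcard⟩ := Finset.exists_subset_card_eq (s := (Finset.univ : Finset ι))
      (n := min (2 * s) n) (by simp [hn, min_le_right])
    obtain ⟨y, hy0, hysupp, hyker⟩ := kern M T (by omega)
    have hsupp : (Function.support y).ncard ≤ 2 * s := by
      calc (Function.support y).ncard ≤ (↑T : Set ι).ncard :=
            Set.ncard_le_ncard hysupp (T.finite_toSet)
        _ = T.card := Set.ncard_coe_finset T
        _ ≤ 2 * s := by omega
    have hlow := (hRIP y hsupp).1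
    rw [hyker, l2normSq_zero] at hlow
    nlinarith [l2normSq_pos hy0]
  -- main branch: d < n and 2*s ≤ d
  have h2sn : 2 * s ≤ n := by omega
  set q := n / s with hq
  have hq2 : 2 ≤ q := (Nat.le_div_iff_mul_le (by omega)).2 (by omega)
  have hq1 : 1 ≤ q := by omega
  have hcard : Fintype.card (Fin s × Fin q) ≤ Fintype.card ι := by
    rw [Fintype.card_prod, Fintype.card_fin, Fintype.card_fin]
    calc s * q = q * s := mul_comm _ _
      _ ≤ n := Nat.div_mul_le_self n s
  obtain ⟨emb⟩ := Function.Embedding.nonempty_of_card_le hcard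
  set t := s - (s / 2 + 1) with ht
  have hts : s / 2 + 1 ≤ s := by omega
  set Rl : (Fin s → Fin q) → (Fin s → Fin q) → Prop :=
    fun f g => s / 2 + 1 ≤ agree f g with hRl
  have hRsym : ∀ f g, Rl f g → Rl g f := by
    intro f g h
    have h' : s / 2 + 1 ≤ agree f g := h
    show s / 2 + 1 ≤ agree g f
    rwa [agree_symm g f]
  have hRrefl : ∀ f, Rl f f := by
    intro f
    have h1 : agree f f = s := by simp [agree]
    show s / 2 + 1 ≤ agree f f
    omega
  have hV : ∀ f, (Finset.univ.filter (fun g => Rl f g)).card ≤ 2 ^ s * q ^ t := by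
    intro f
    refine le_trans (Finset.card_le_card ?_) (ballBound s q t hq1 f)
    intro g hg
    simp only [Finset.mem_filter, Finset.mem_univ, true_and] at hg ⊢
    have h1 : (Finset.univ.filter fun i => g i ≠ f i) =
        (Finset.univ.filter fun i => ¬ (f i = g i)) := by
      apply Finset.filter_congr
      intro i _
      simp [eq_comm]
    have h2 := Finset.card_filter_add_card_filter_not
      (s := (Finset.univ : Finset (Fin s))) (p := fun i => f i = g i)
    simp only [Finset.card_univ, Fintype.card_fin] at h2
    rw [h1]
    have hg' : s / 2 + 1 ≤ (Finset.univ.filter (fun i => f i = g i)).card := hg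
    omega
  obtain ⟨S, hSsep, hScount⟩ := greedy Rl hRsym hRrefl (2 ^ s * q ^ t) hV
  have hXcard : Fintype.card (Fin s → Fin q) = q ^ s := by
    rw [Fintype.card_fun, Fintype.card_fin, Fintype.card_fin]
  have hcode : q ^ s ≤ S.card * (2 ^ s * q ^ t) := by rw [← hXcard]; exact hScount
  have hncode1 : 1 ≤ S.card := by
    by_contra hcon
    push_neg at hcon
    interval_cases hSc : S.card
    · simp at hcode
      have : 1 ≤ q ^ s := Nat.one_le_pow _ _ (by omega)
      omega
  -- indicator vectors
  set img : (Fin s → Fin q) → Finset ι := fun f => Finset.univ.image (fun i => emb (i, f i))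
    with himg
  have himgcard : ∀ f, (img f).card = s := by
    intro f
    rw [himg]
    have hinj : Function.Injective (fun i : Fin s => emb (i, f i)) := by
      intro a b hab
      have := emb.injective hab
      exact (Prod.ext_iff.1 this).1
    rw [Finset.card_image_of_injective _ hinj, Finset.card_univ, Fintype.card_fin]
  set yv : (Fin s → Fin q) → ι → ℂ := fun f a => if a ∈ img f then 1 else 0 with hyv
  have hsuppv : ∀ f, Function.support (yv f) = ↑(img f) := by
    intro f
    ext a
    by_cases h : a ∈ img f <;> simp [Function.mem_support, hyv, h]
  have hl2v : ∀ f, l2normSq (yv f) = s := by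
    intro f
    unfold l2normSq
    have habs : ∀ a, ‖yv f a‖ ^ 2 = if a ∈ img f then (1 : ℝ) else 0 := by
      intro a
      by_cases h : a ∈ img f <;> simp [hyv, h]
    rw [Finset.sum_congr rfl (fun a _ => habs a), Finset.sum_ite_mem, Finset.univ_inter,
      Finset.sum_const, himgcard f]
    simp
  have hsuppcard : ∀ f, (Function.support (yv f)).ncard ≤ 2 * s := by
    intro f
    rw [hsuppv f, Set.ncard_coe_finset, himgcard f]
    omega
  have hsuppdiff : ∀ f g, (Function.support (yv f - yv g)).ncard ≤ 2 * s := by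
    intro f g
    have h1 : Function.support (yv f - yv g) ⊆
        Function.support (yv f) ∪ Function.support (yv g) := by
      intro a ha
      simp only [Function.mem_support, Pi.sub_apply] at ha
      by_contra hc
      simp only [Set.mem_union, Function.mem_support, not_or, not_not] at hc
      rw [hc.1, hc.2, sub_zero] at ha
      exact ha rfl
    calc (Function.support (yv f - yv g)).ncard
        ≤ (Function.support (yv f) ∪ Function.support (yv g)).ncard :=
          Set.ncard_le_ncard h1 ((Set.toFinite _))
      _ ≤ (Function.support (yv f)).ncard + (Function.support (yv g)).ncard :=
          Set.ncard_union_le _ _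
      _ ≤ 2 * s := by
          rw [hsuppv f, hsuppv g, Set.ncard_coe_finset, Set.ncard_coe_finset,
            himgcard f, himgcard g]
          omega
  have hinter : ∀ f g, (img f ∩ img g).card ≤ agree f g := by
    intro f g
    have hsub : img f ∩ img g ⊆
        (Finset.univ.filter (fun i => f i = g i)).image (fun i => emb (i, f i)) := by
      intro a ha
      rcases Finset.mem_inter.1 ha with ⟨haf, hag⟩
      rw [himg] at haf hag
      obtain ⟨i, _, hi⟩ := Finset.mem_image.1 haf
      obtain ⟨j, _, hj⟩ := Finset.mem_image.1 hag
      have hij : (i, f i) = (j, g j) := emb.injective (hi.trans hj.symm)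
      have h1 : i = j := (Prod.ext_iff.1 hij).1
      have h2 : f i = g i := by
        subst h1
        exact (Prod.ext_iff.1 hij).2
      exact Finset.mem_image.2 ⟨i, Finset.mem_filter.2 ⟨Finset.mem_univ _, h2⟩, hi⟩
    calc (img f ∩ img g).card
        ≤ ((Finset.univ.filter (fun i => f i = g i)).image (fun i => emb (i, f i))).card :=
          Finset.card_le_card hsub
      _ ≤ (Finset.univ.filter (fun i => f i = g i)).card := Finset.card_image_le
      _ = agree f g := rfl
  have hdiffl2 : ∀ f g, (s : ℝ) - (agree f g : ℝ) ≤ l2normSq (yv f - yv g) := by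
    intro f g
    have habs : ∀ a ∈ img f \ img g, ‖(yv f - yv g) a‖ ^ 2 = 1 := by
      intro a ha
      rcases Finset.mem_sdiff.1 ha with ⟨h1, h2⟩
      simp [hyv, h1, h2]
    have hmono : ((img f \ img g).card : ℝ) ≤ l2normSq (yv f - yv g) := by
      unfold l2normSq
      calc ((img f \ img g).card : ℝ)
          = ∑ a ∈ img f \ img g, ‖(yv f - yv g) a‖ ^ 2 := by
            rw [Finset.sum_congr rfl habs]
            simp
        _ ≤ ∑ a : ι, ‖(yv f - yv g) a‖ ^ 2 :=
            Finset.sum_le_sum_of_subset_of_nonneg (Finset.subset_univ _)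
              (fun a _ _ => by positivity)
    have h3 := Finset.card_sdiff_add_card_inter (img f) (img g)
    have h4 : s ≤ (img f \ img g).card + agree f g := by
      have := hinter f g
      have := himgcard f
      omega
    have h5 : (s : ℝ) ≤ ((img f \ img g).card : ℝ) + (agree f g : ℝ) := by exact_mod_cast h4
    linarith
  -- map to Euclidean space
  set J : (Fin d → ℂ) → EuclideanSpace ℝ (Fin d × Bool) := fun u =>
    (WithLp.equiv 2 _).symm (fun p => if p.2 then (u p.1).im else (u p.1).re) with hJ
  have hJnorm : ∀ u, ‖J u‖ = Real.sqrt (l2normSq u) := by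
    intro u
    rw [hJ, EuclideanSpace.norm_eq]
    congr 1
    rw [Fintype.sum_prod_type]
    unfold l2normSq
    refine Finset.sum_congr rfl fun i _ => ?_
    rw [Fintype.sum_bool]
    simp only [WithLp.equiv_symm_apply, PiLp.toLp_apply, if_true, if_false, Real.norm_eq_abs, _root_.sq_abs,
      Complex.sq_norm, Complex.normSq_apply]
    norm_num
    ring
  have hJsub : ∀ u v, J u - J v = J (u - v) := by
    intro u v
    rw [hJ]
    dsimp only
    rw [WithLp.equiv_symm_apply, ← WithLp.toLp_sub]
    congr 1
    funext p
    rcases p with ⟨i, b⟩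
    cases b <;> simp [Pi.sub_apply, Complex.sub_re, Complex.sub_im]
  -- enumerate the code
  set nc := S.card with hnc
  set el : Fin nc → (Fin s → Fin q) := fun i => (S.equivFin.symm i).1 with hel
  have helmem : ∀ i, el i ∈ S := fun i => (S.equivFin.symm i).2
  have helinj : ∀ i j : Fin nc, i ≠ j → el i ≠ el j := by
    intro i j hij he
    apply hij
    have h1 : S.equivFin.symm i = S.equivFin.symm j := Subtype.ext he
    exact S.equivFin.symm.injective h1
  set Y : Fin nc → EuclideanSpace ℝ (Fin d × Bool) :=
    fun i => J (M.mulVec (yv (el i))) with hY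
  have hs0 : (0 : ℝ) < s := by exact_mod_cast hs
  set r := Real.sqrt ((s : ℝ) / 8) with hrdef
  have hrpos : 0 < r := Real.sqrt_pos.2 (by positivity)
  have hRform : Real.sqrt (2 * (s : ℝ)) = 4 * r := by
    rw [hrdef, show (2 * (s : ℝ)) = 4 ^ 2 * ((s : ℝ) / 8) by ring,
      Real.sqrt_mul (by positivity), Real.sqrt_sq (by norm_num)]
  have hYb : ∀ i, ‖Y i‖ ≤ Real.sqrt (2 * (s : ℝ)) := by
    intro i
    rw [hY]
    dsimp only
    rw [hJnorm]
    apply Real.sqrt_le_sqrt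
    have hup := (hRIP (yv (el i)) (hsuppcard _)).2
    rw [hl2v] at hup
    nlinarith
  have hYsep : ∀ i j : Fin nc, i ≠ j → r ≤ ‖Y i - Y j‖ := by
    intro i j hij
    rw [hY]
    dsimp only
    rw [hJsub, ← Matrix.mulVec_sub, hJnorm]
    have hnR := hSsep (el i) (helmem i) (el j) (helmem j) (helinj i j hij)
    have hagr : agree (el i) (el j) ≤ s / 2 := by
      by_contra hc
      push_neg at hc
      exact hnR (show s / 2 + 1 ≤ agree (el i) (el j) by omega)
    have hlow := (hRIP (yv (el i) - yv (el j)) (hsuppdiff _ _)).1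
    have hd2 : (s : ℝ) / 2 ≤ l2normSq (yv (el i) - yv (el j)) := by
      have h1 := hdiffl2 (el i) (el j)
      have h2 : (agree (el i) (el j) : ℝ) ≤ (s : ℝ) / 2 := by
        calc (agree (el i) (el j) : ℝ) ≤ ((s / 2 : ℕ) : ℝ) := by exact_mod_cast hagr
          _ ≤ (s : ℝ) / 2 := Nat.cast_div_le
      linarith
    rw [hrdef]
    apply Real.sqrt_le_sqrt
    nlinarith [l2normSq_nonneg (yv (el i) - yv (el j))]
  have hpack := packing Y hrpos hYb hYsep
  have h9 : (nc : ℝ) ≤ 9 ^ (2 * d) := by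
    have hRr : Real.sqrt (2 * (s : ℝ)) + r / 2 = 9 * (r / 2) := by rw [hRform]; ring
    rw [hRr, mul_pow] at hpack
    have hpow : (0 : ℝ) < (r / 2) ^ (2 * d) := by positivity
    calc (nc : ℝ) = nc * (r / 2) ^ (2 * d) / (r / 2) ^ (2 * d) := by field_simp
      _ ≤ 9 ^ (2 * d) * (r / 2) ^ (2 * d) / (r / 2) ^ (2 * d) := by gcongr
      _ = 9 ^ (2 * d) := by field_simp
  -- take logarithms
  have hq0 : (0 : ℝ) < q := by exact_mod_cast by omega
  have hnc0 : (0 : ℝ) < nc := by exact_mod_cast hncode1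
  have hlogq0 : 0 ≤ Real.log q := Real.log_nonneg (by exact_mod_cast hq1)
  have hcodeR : (q : ℝ) ^ s ≤ (nc : ℝ) * (2 ^ s * q ^ t) := by exact_mod_cast hcode
  have hlogcode : (s : ℝ) * Real.log q ≤
      Real.log nc + s * Real.log 2 + t * Real.log q := by
    have h1 := Real.log_le_log (by positivity) hcodeR
    rw [Real.log_pow, Real.log_mul (ne_of_gt hnc0) (by positivity),
      Real.log_mul (by positivity) (by positivity), Real.log_pow, Real.log_pow] at h1
    push_cast at h1 ⊢
    linarith
  have hlognc : Real.log nc ≤ 16 * d := by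
    calc Real.log nc ≤ Real.log ((9 : ℝ) ^ (2 * d)) := Real.log_le_log hnc0 h9
      _ = ((2 * d : ℕ) : ℝ) * Real.log 9 := by rw [Real.log_pow]
      _ ≤ 16 * d := by
          have h9' : Real.log 9 ≤ 8 := by
            have := Real.log_le_sub_one_of_pos (x := 9) (by norm_num)
            linarith
          have h2d : (0 : ℝ) ≤ ((2 * d : ℕ) : ℝ) := Nat.cast_nonneg _
          have : ((2 * d : ℕ) : ℝ) = 2 * d := by push_cast; ring
          nlinarith [Real.log_nonneg (show (1:ℝ) ≤ 9 by norm_num)]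
  have hlog2 : Real.log 2 ≤ 1 := by
    have := Real.log_le_sub_one_of_pos (x := 2) (by norm_num)
    linarith
  have hst : (s : ℝ) / 2 ≤ (s : ℝ) - t := by
    have h1 : s ≤ 2 * (s / 2) + 1 := by omega
    have h1R : (s : ℝ) ≤ 2 * ((s / 2 : ℕ) : ℝ) + 1 := by exact_mod_cast h1
    have h2 : ((t : ℕ) : ℝ) = (s : ℝ) - ((s / 2 : ℕ) : ℝ) - 1 := by
      rw [ht]
      push_cast [Nat.cast_sub hts]
      ring
    linarith
  have hstar : (s : ℝ) / 2 * Real.log q ≤ 16 * d + s := by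
    have h1 : ((s : ℝ) - t) * Real.log q ≤ Real.log nc + s * Real.log 2 := by
      nlinarith
    have h2 : (s : ℝ) / 2 * Real.log q ≤ ((s : ℝ) - t) * Real.log q :=
      mul_le_mul_of_nonneg_right hst hlogq0
    have h3 : (s : ℝ) * Real.log 2 ≤ s := by
      nlinarith
    linarith
  have hq2R : (n : ℝ) / s < 2 * q := by
    have h1 : n < (n / s + 1) * s := by
      have hmod := Nat.mod_lt n (show 0 < s by omega)
      calc n = s * (n / s) + n % s := (Nat.div_add_mod n s).symm
        _ < s * (n / s) + s := Nat.add_lt_add_left hmod _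
        _ = (n / s + 1) * s := by ring
    have h1R : (n : ℝ) < ((q : ℝ) + 1) * s := by
      rw [hq]
      exact_mod_cast h1
    rw [div_lt_iff₀ hs0]
    have : (q : ℝ) + 1 ≤ 2 * q := by
      have : (1 : ℝ) ≤ q := by exact_mod_cast hq1
      linarith
    nlinarith
  have hlogen : Real.log (Real.exp 1 * n / s) ≤ 2 + Real.log q := by
    rw [show Real.exp 1 * (n : ℝ) / s = Real.exp 1 * ((n : ℝ) / s) by ring,
      Real.log_mul (Real.exp_ne_zero 1) (by positivity), Real.log_exp]
    have h2 : Real.log ((n : ℝ) / s) ≤ Real.log (2 * q) :=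
      Real.log_le_log (by positivity) (le_of_lt hq2R)
    rw [Real.log_mul (by norm_num) (ne_of_gt hq0)] at h2
    linarith
  have hsd : (s : ℝ) ≤ (d : ℝ) / 2 := by
    have : ((2 * s : ℕ) : ℝ) ≤ (d : ℝ) := by exact_mod_cast h2sd
    push_cast at this
    linarith
  calc (s : ℝ) * Real.log (Real.exp 1 * n / s) ≤ s * (2 + Real.log q) :=
        mul_le_mul_of_nonneg_left hlogen (by positivity)
    _ = 2 * s + s * Real.log q := by ring
    _ ≤ 2 * s + 2 * (16 * d + s) := by linarith
    _ ≤ 100 * d := by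
        have hd0 : (0 : ℝ) ≤ d := Nat.cast_nonneg _
        linarith


end Key


section Extract
/-- Extract a witness δ from `ripConst < b`. -/
lemma rip_extract {κ ι : Type*} [Fintype κ] [Fintype ι] (s : ℕ) (A : Matrix κ ι ℂ) {b : ℝ}
    (hb : ripConst s A < b) :
    ∃ δ : ℝ, 0 ≤ δ ∧ δ < b ∧ ∀ x : ι → ℂ, (Function.support x).ncard ≤ s →
      (1 - δ) * l2normSq x ≤ l2normSq (A.mulVec x) ∧
      l2normSq (A.mulVec x) ≤ (1 + δ) * l2normSq x := by
  classical
  rw [ripConst] at hb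
  set C : ℝ := ∑ p, ∑ Θ, ‖A p Θ‖ ^ 2 with hC
  have hC0 : 0 ≤ C := Finset.sum_nonneg fun p _ => Finset.sum_nonneg fun Θ _ => by positivity
  have hub : ∀ x : ι → ℂ, l2normSq (A.mulVec x) ≤ C * l2normSq x := by
    intro x
    unfold l2normSq
    calc ∑ p, ‖A.mulVec x p‖ ^ 2
        ≤ ∑ p, ((∑ Θ, ‖A p Θ‖ ^ 2) * (∑ Θ, ‖x Θ‖ ^ 2)) := by
          refine Finset.sum_le_sum fun p _ => ?_
          have h1 : ‖A.mulVec x p‖ ≤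
              ∑ Θ, ‖A p Θ‖ * ‖x Θ‖ := by
            unfold Matrix.mulVec dotProduct
            calc ‖∑ Θ, A p Θ * x Θ‖
                ≤ ∑ Θ, ‖A p Θ * x Θ‖ := norm_sum_le _ _
              _ = ∑ Θ, ‖A p Θ‖ * ‖x Θ‖ := by simp [norm_mul]
          calc ‖A.mulVec x p‖ ^ 2
              ≤ (∑ Θ, ‖A p Θ‖ * ‖x Θ‖) ^ 2 :=
                pow_le_pow_left₀ (norm_nonneg _) h1 2
            _ ≤ (∑ Θ, ‖A p Θ‖ ^ 2) * (∑ Θ, ‖x Θ‖ ^ 2) :=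
                Finset.sum_mul_sq_le_sq_mul_sq _ _ _
      _ = C * ∑ Θ, ‖x Θ‖ ^ 2 := by rw [hC, Finset.sum_mul]
  have hmem : (1 + C) ∈ {δ : ℝ | 0 ≤ δ ∧ ∀ x : ι → ℂ, (Function.support x).ncard ≤ s →
      (1 - δ) * l2normSq x ≤ l2normSq (A.mulVec x) ∧
      l2normSq (A.mulVec x) ≤ (1 + δ) * l2normSq x} := by
    refine ⟨by linarith, fun x _ => ⟨?_, ?_⟩⟩
    · have h1 : (1 - (1 + C)) * l2normSq x ≤ 0 :=
        mul_nonpos_of_nonpos_of_nonneg (by linarith) (l2normSq_nonneg x)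
      linarith [l2normSq_nonneg (A.mulVec x)]
    · calc l2normSq (A.mulVec x) ≤ C * l2normSq x := hub x
        _ ≤ (1 + (1 + C)) * l2normSq x := by nlinarith [l2normSq_nonneg x]
  have hbdd : BddBelow {δ : ℝ | 0 ≤ δ ∧ ∀ x : ι → ℂ, (Function.support x).ncard ≤ s →
      (1 - δ) * l2normSq x ≤ l2normSq (A.mulVec x) ∧
      l2normSq (A.mulVec x) ≤ (1 + δ) * l2normSq x} := ⟨0, fun δ hδ => hδ.1⟩
  obtain ⟨δ, hδS, hδb⟩ := (csInf_lt_iff hbdd ⟨1 + C, hmem⟩).1 hb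
  exact ⟨δ, hδS.1, hδb, hδS.2⟩

end Extract

section Transfer

lemma ePhase_abs (x : ℝ) : ‖ePhase x‖ = 1 := by
  rw [ePhase, Complex.norm_exp_ofReal_mul_I]

lemma ePhase_zero : ePhase 0 = 1 := by
  simp [ePhase]

/-- The fixed-angle slice of `Ã` behaves like an `N_t × N_t²` matrix. -/
lemma transfer (NT NR Nt : ℕ) [NeZero NT] [NeZero NR] [NeZero Nt] (sg : Fin NT → Fin Nt → ℂ) :
    ∃ B : Matrix (Fin Nt) (Fin Nt × Fin Nt) ℂ,
      ∀ y : Fin Nt × Fin Nt → ℂ,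
        ∃ x : Grid NT NR Nt → ℂ,
          (Function.support x).ncard ≤ (Function.support y).ncard ∧
          l2normSq x = l2normSq y ∧
          l2normSq ((Atil NT NR Nt sg).mulVec x) = l2normSq (B.mulVec y) := by
  classical
  haveI : NeZero (NT * NR) := ⟨mul_ne_zero (NeZero.ne NT) (NeZero.ne NR)⟩
  set β₀ : Fin (NT * NR) := 0 with hβ₀
  set B : Matrix (Fin Nt) (Fin Nt × Fin Nt) ℂ := fun k p =>
    (((Real.sqrt ((NT : ℝ) * (Nt : ℝ))) : ℂ))⁻¹ * colA NT NR Nt sg (β₀, p) ((0 : Fin NR), k)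
    with hB
  have hNR0 : (0 : ℝ) < NR := by
    have := Nat.pos_of_ne_zero (NeZero.ne NR)
    exact_mod_cast this
  -- factorization of the slice columns
  have hcol : ∀ (p : Fin Nt × Fin Nt) (j : Fin NR) (k : Fin Nt),
      colA NT NR Nt sg (β₀, p) (j, k) =
        ePhase (((β₀.1 : ℝ) + 1) * (j.1 : ℝ) / (NR : ℝ)) *
          colA NT NR Nt sg (β₀, p) ((0 : Fin NR), k) := by
    intro p j k
    unfold colA
    dsimp only
    rw [show (((0 : Fin NR).1 : ℝ)) = 0 from by simp]
    rw [mul_zero, zero_div, ePhase_zero, one_mul]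
  refine ⟨B, fun y => ?_⟩
  set x : Grid NT NR Nt → ℂ := fun Θ => if Θ.1 = β₀ then y Θ.2 else 0 with hx
  have hsupp : (Function.support x).ncard ≤ (Function.support y).ncard := by
    have hsub : Function.support x ⊆ (fun p => (β₀, p)) '' (Function.support y) := by
      intro a ha
      simp only [Function.mem_support, hx] at ha
      by_cases h : a.1 = β₀
      · refine ⟨a.2, ?_, ?_⟩
        · simp only [Function.mem_support]
          rw [h] at ha; simpa [h] using ha
        · simp [← h]
      · simp [h] at ha
    calc (Function.support x).ncard
        ≤ ((fun p => (β₀, p)) '' (Function.support y)).ncard :=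
          Set.ncard_le_ncard hsub (Set.toFinite _)
      _ = (Function.support y).ncard :=
          Set.ncard_image_of_injective _ (fun a b hab => (Prod.ext_iff.1 hab).2)
  have hl2x : l2normSq x = l2normSq y := by
    unfold l2normSq
    rw [Fintype.sum_prod_type]
    have hterm : ∀ β : Fin (NT * NR), ∑ p : Fin Nt × Fin Nt, ‖x (β, p)‖ ^ 2 =
        if β = β₀ then ∑ p : Fin Nt × Fin Nt, ‖y p‖ ^ 2 else 0 := by
      intro β
      by_cases h : β = β₀ <;> simp [hx, h]
    rw [Finset.sum_congr rfl fun β _ => hterm β, Finset.sum_ite_eq' Finset.univ β₀]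
    simp
  -- the scaling identity
  have hsqrtsplit : (((Real.sqrt ((NT : ℝ) * (NR : ℝ) * (Nt : ℝ))) : ℂ))⁻¹ =
      (((Real.sqrt (NR : ℝ)) : ℂ))⁻¹ * (((Real.sqrt ((NT : ℝ) * (Nt : ℝ))) : ℂ))⁻¹ := by
    rw [show (NT : ℝ) * (NR : ℝ) * (Nt : ℝ) = (NR : ℝ) * ((NT : ℝ) * (Nt : ℝ)) by ring,
      Real.sqrt_mul (by positivity), Complex.ofReal_mul, mul_inv]
  have hmv : ∀ (j : Fin NR) (k : Fin Nt), (Atil NT NR Nt sg).mulVec x (j, k) =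
      (((Real.sqrt (NR : ℝ)) : ℂ))⁻¹ *
        (ePhase (((β₀.1 : ℝ) + 1) * (j.1 : ℝ) / (NR : ℝ)) * B.mulVec y k) := by
    intro j k
    unfold Matrix.mulVec dotProduct Atil colAt
    dsimp only
    rw [Fintype.sum_prod_type]
    rw [Finset.sum_eq_single β₀ ?h0 ?h1]
    case h0 =>
      intro β _ hβ
      refine Finset.sum_eq_zero fun p _ => ?_
      simp [hx, hβ]
    case h1 =>
      intro hcon
      exact absurd (Finset.mem_univ β₀) hcon
    rw [Finset.mul_sum, Finset.mul_sum]
    refine Finset.sum_congr rfl fun p _ => ?_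
    rw [hcol p j k, hB]
    dsimp only
    rw [hsqrtsplit]
    simp only [hx, if_pos rfl]
    ring
  have hl2mv : l2normSq ((Atil NT NR Nt sg).mulVec x) = l2normSq (B.mulVec y) := by
    unfold l2normSq
    rw [Fintype.sum_prod_type]
    have hterm : ∀ (j : Fin NR) (k : Fin Nt),
        ‖(Atil NT NR Nt sg).mulVec x (j, k)‖ ^ 2 =
        ((NR : ℝ))⁻¹ * ‖B.mulVec y k‖ ^ 2 := by
      intro j k
      rw [hmv j k, norm_mul, norm_mul, ePhase_abs]
      rw [norm_inv, Complex.norm_real, Real.norm_eq_abs, _root_.abs_of_nonneg (Real.sqrt_nonneg _)]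
      rw [one_mul, mul_pow, inv_pow, Real.sq_sqrt (le_of_lt hNR0)]
    rw [Finset.sum_congr rfl fun j _ => Finset.sum_congr rfl fun k _ => hterm j (k : Fin Nt)]
    rw [Finset.sum_congr rfl fun j (_ : j ∈ Finset.univ) => (Finset.mul_sum
      (Finset.univ : Finset (Fin Nt)) (fun k => ‖B.mulVec y k‖ ^ 2)
      ((NR : ℝ))⁻¹).symm]
    rw [Finset.sum_const, Finset.card_univ, Fintype.card_fin, nsmul_eq_mul]
    rw [← mul_assoc, mul_inv_cancel₀ (ne_of_gt hNR0), one_mul]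
  exact ⟨x, hsupp, hl2x, hl2mv⟩

end Transfer

/-- lower bound on `N_t` forced by the RIP (instance optimality). -/
theorem stmt1 : ∃ c : ℝ, 0 < c ∧
    ∀ (NT NR Nt : ℕ) [NeZero NT] [NeZero NR] [NeZero Nt]
      (sg : Fin NT → Fin Nt → ℂ) (s : ℕ),
      ripConst (2 * s) (Atil NT NR Nt sg) < 1 / Real.sqrt 2 →
      c * (s : ℝ) * Real.log (Real.exp 1 * (Nt : ℝ) ^ 2 / (s : ℝ)) ≤ (Nt : ℝ) := by
  refine ⟨1 / 100, by norm_num, ?_⟩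
  intro NT NR Nt _ _ _ sg s hrip
  rcases Nat.eq_zero_or_pos s with rfl | hs
  · simpa using Nat.cast_nonneg (α := ℝ) Nt
  obtain ⟨δ, hδ0, hδb, hδprop⟩ := rip_extract (2 * s) (Atil NT NR Nt sg) hrip
  obtain ⟨B, hB⟩ := transfer NT NR Nt sg
  have hRIP : ∀ y : Fin Nt × Fin Nt → ℂ, (Function.support y).ncard ≤ 2 * s →
      (1 - δ) * l2normSq y ≤ l2normSq (B.mulVec y) ∧
      l2normSq (B.mulVec y) ≤ (1 + δ) * l2normSq y := by
    intro y hy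
    obtain ⟨x, hx1, hx2, hx3⟩ := hB y
    have hprop := hδprop x (le_trans hx1 hy)
    rw [hx2, hx3] at hprop
    exact hprop
  have hn1 : 1 ≤ Fintype.card (Fin Nt × Fin Nt) := by
    simp only [Fintype.card_prod, Fintype.card_fin]
    have := Nat.pos_of_ne_zero (NeZero.ne Nt)
    exact Nat.one_le_iff_ne_zero.2 (by positivity)
  have hkey := key B hs hn1 δ hδ0 hδb hRIP
  have hc : ((Fintype.card (Fin Nt × Fin Nt) : ℕ) : ℝ) = (Nt : ℝ) ^ 2 := by
    simp only [Fintype.card_prod, Fintype.card_fin]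
    push_cast
    ring
  rw [hc] at hkey
  linarith

end MIMO
end
end

section
/- For arbitrary signals s_1, …, s_{N_T} ∈ ℂ^{N_t} and any two grid points Θ = (β,τ,f), Θ' = (β',τ',f') ∈ G whose angle parameters lie in different angle classes (i.e., β'−β is not a multiple of N_R), the corresponding columns of the MIMO measurement matrix are orthogonal: ⟨A_Θ, A_{Θ'}⟩ = 0. More precisely, ⟨A_Θ, A_{Θ'}⟩ = δ^{~N_R}_{β,β'}·N_R·⟨Σ_{i=1}^{N_T} e^{2πi β(i−1)/(N_T N_R)} M_f T_τ s_i, Σ_{i=1}^{N_T} e^{2πi β'(i−1)/(N_T N_R)} M_{f'} T_{τ'} s_i⟩, where δ^{~N_R}_{β,β'} = 1 if N_R divides β'−β and 0 otherwise. -/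
open MeasureTheory ProbabilityTheory Complex
open scoped ENNReal Matrix

noncomputable section

namespace MIMO

lemma ePhase_add (x y : ℝ) : ePhase (x + y) = ePhase x * ePhase y := by
  unfold ePhase
  rw [← Complex.exp_add]
  push_cast
  ring_nf

lemma conj_ePhase (x : ℝ) : (starRingEnd ℂ) (ePhase x) = ePhase (-x) := by
  unfold ePhase
  rw [← Complex.exp_conj]
  push_cast
  simp [Complex.ext_iff, Complex.exp_re, Complex.exp_im]

lemma ePhase_int (n : ℤ) : ePhase (n : ℝ) = 1 := by
  unfold ePhase
  have := Complex.exp_int_mul_two_pi_mul_I n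
  rw [← this]
  congr 1
  push_cast
  ring

lemma ePhase_pow (x : ℝ) (n : ℕ) : ePhase x ^ n = ePhase (n * x) := by
  unfold ePhase
  rw [← Complex.exp_nat_mul]
  congr 1
  push_cast
  ring

lemma sum_phase (NR : ℕ) [NeZero NR] (m : ℤ) :
    ∑ j : Fin NR, ePhase ((m : ℝ) * (j : ℝ) / (NR : ℝ)) =
      (if m % (NR : ℤ) = 0 then 1 else 0) * (NR : ℂ) := by
  have hNR : (NR : ℝ) ≠ 0 := Nat.cast_ne_zero.mpr (NeZero.ne NR)
  set ζ : ℂ := ePhase ((m : ℝ) / (NR : ℝ)) with hζ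
  have hterm : ∀ j : Fin NR, ePhase ((m : ℝ) * (j : ℝ) / (NR : ℝ)) = ζ ^ (j : ℕ) := by
    intro j
    rw [hζ, ePhase_pow]
    congr 1
    ring
  rw [Finset.sum_congr rfl (fun j _ => hterm j), Fin.sum_univ_eq_sum_range (fun i => ζ ^ i)]
  by_cases hdvd : m % (NR : ℤ) = 0
  · have ⟨q, hq⟩ : (NR : ℤ) ∣ m := Int.dvd_of_emod_eq_zero hdvd
    have hζ1 : ζ = 1 := by
      rw [hζ, hq]
      have h0 : (((NR : ℤ) * q : ℤ) : ℝ) / (NR : ℝ) = ((q : ℤ) : ℝ) := by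
        push_cast; field_simp
      rw [h0, ePhase_int]
    simp [hζ1, hdvd]
  · have hζn : ζ ^ NR = 1 := by
      rw [hζ, ePhase_pow]
      have : (NR : ℝ) * ((m : ℝ) / (NR : ℝ)) = (m : ℝ) := by field_simp
      rw [this, ePhase_int]
    have hζne : ζ ≠ 1 := by
      intro h
      rw [hζ] at h
      unfold ePhase at h
      rw [Complex.exp_eq_one_iff] at h
      obtain ⟨k, hk⟩ := h
      apply hdvd
      have h3 : 2 * Real.pi * ((m : ℝ) / (NR : ℝ)) = (k : ℝ) * (2 * Real.pi) := by
        have h := congrArg Complex.im hk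
        simpa using h
      have h2pi : (2 * Real.pi) ≠ 0 := by positivity
      have h5 : (m : ℝ) / (NR : ℝ) = (k : ℝ) := by
        apply mul_left_cancel₀ h2pi
        linear_combination h3
      have h4 : (m : ℝ) = (k : ℝ) * (NR : ℝ) := by
        field_simp at h5
        linarith [h5]
      have h6 : m = k * (NR : ℤ) := by exact_mod_cast h4
      rw [h6]
      simp [Int.mul_emod_left]
    rw [geom_sum_eq hζne, hζn]
    simp [hdvd]

/-- columns from different angle classes are orthogonal; explicit
inner-product formula (equation (1.20) of the paper). -/
theorem stmt18 (NT NR Nt : ℕ) [NeZero NT] [NeZero NR] [NeZero Nt]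
    (sg : Fin NT → Fin Nt → ℂ) (Θ Θ' : Grid NT NR Nt) :
    (cInner (colA NT NR Nt sg Θ) (colA NT NR Nt sg Θ') =
      (if ((Θ'.1.1 : ℤ) - (Θ.1.1 : ℤ)) % (NR : ℤ) = 0 then 1 else 0) * (NR : ℂ) *
        cInner
          (fun k => ∑ i : Fin NT,
            ePhase (((Θ.1.1 : ℝ) + 1) * (i.1 : ℝ) / ((NT : ℝ) * (NR : ℝ))) *
              modShift Nt (Θ.2.1.1 + 1) (Θ.2.2.1 + 1) (sg i) k)
          (fun k => ∑ i : Fin NT,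
            ePhase (((Θ'.1.1 : ℝ) + 1) * (i.1 : ℝ) / ((NT : ℝ) * (NR : ℝ))) *
              modShift Nt (Θ'.2.1.1 + 1) (Θ'.2.2.1 + 1) (sg i) k)) ∧
    (¬ ((Θ'.1.1 : ℤ) - (Θ.1.1 : ℤ)) % (NR : ℤ) = 0 →
      cInner (colA NT NR Nt sg Θ) (colA NT NR Nt sg Θ') = 0) := by
  have hmain : cInner (colA NT NR Nt sg Θ) (colA NT NR Nt sg Θ') =
      (if ((Θ'.1.1 : ℤ) - (Θ.1.1 : ℤ)) % (NR : ℤ) = 0 then 1 else 0) * (NR : ℂ) *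
        cInner
          (fun k => ∑ i : Fin NT,
            ePhase (((Θ.1.1 : ℝ) + 1) * (i.1 : ℝ) / ((NT : ℝ) * (NR : ℝ))) *
              modShift Nt (Θ.2.1.1 + 1) (Θ.2.2.1 + 1) (sg i) k)
          (fun k => ∑ i : Fin NT,
            ePhase (((Θ'.1.1 : ℝ) + 1) * (i.1 : ℝ) / ((NT : ℝ) * (NR : ℝ))) *
              modShift Nt (Θ'.2.1.1 + 1) (Θ'.2.2.1 + 1) (sg i) k) := by
    simp only [cInner, colA, Fintype.sum_prod_type]
    rw [← sum_phase NR ((Θ'.1.1 : ℤ) - (Θ.1.1 : ℤ)), Finset.sum_mul_sum]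
    refine Finset.sum_congr rfl (fun j _ => Finset.sum_congr rfl (fun k _ => ?_))
    rw [map_mul, conj_ePhase]
    have h1 : ePhase (-(((Θ.1.1 : ℝ) + 1) * (j.1 : ℝ) / (NR : ℝ))) *
        ePhase (((Θ'.1.1 : ℝ) + 1) * (j.1 : ℝ) / (NR : ℝ)) =
        ePhase ((((Θ'.1.1 : ℤ) - (Θ.1.1 : ℤ) : ℤ) : ℝ) * (j.1 : ℝ) / (NR : ℝ)) := by
      rw [← ePhase_add]
      congr 1
      push_cast
      ring
    rw [← h1]
    ring
  refine ⟨hmain, fun h => ?_⟩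
  rw [hmain, if_neg h]
  ring

end MIMO
end
end
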